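/- (Proposition 1 of the paper, time-warp part, after Vidal et al.) Let σ and σ′ be visit sequences whose duration and time-warp functions have the representations D_σ(t) = D(σ) + max{E(σ) − t, 0}, TW_σ(t) = TW(σ) + max{t − L(σ), 0}, D_{σ′}(t) = D(σ′) + max{E(σ′) − t, 0}, TW_{σ′}(t) = TW(σ′) + max{t − L(σ′), 0} for all t ∈ ℝ, with E(σ) ≤ L(σ) and E(σ′) ≤ L(σ′). Let δ ≥ 0 be the connecting travel time, and set Δ = D(σ) − TW(σ) + δ and Δ_TW = max{E(σ) + Δ − L(σ′), 0}. Then for all t ∈ ℝ, the time warp of the concatenation satisfies TW_{σ⊕δ⊕σ′}(t) = TW'' + max{t − L'', 0}, where TW'' = TW(σ) + TW(σ′) + Δ_TW and L'' = min{L(σ′) − Δ, L(σ)} + Δ_TW. -/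
import Mathlib


/-- Arrival times of a visit sequence started at time `t`:
`a 0 = t`, `a (k+1) = s k + μ k + δ k` where `s k = min (max (a k) (e k)) (l k)`. -/
noncomputable def arrive (μ e l δ : ℕ → ℝ) (t : ℝ) : ℕ → ℝ
  | 0 => t
  | k + 1 => min (max (arrive μ e l δ t k) (e k)) (l k) + μ k + δ k

/-- Service start times with time warp. -/
noncomputable def serve (μ e l δ : ℕ → ℝ) (t : ℝ) (k : ℕ) : ℝ :=
  min (max (arrive μ e l δ t k) (e k)) (l k)

/-- Total time warp of a visit sequence of length `n+1` started at time `t`. -/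
noncomputable def timeWarp (n : ℕ) (μ e l δ : ℕ → ℝ) (t : ℝ) : ℝ :=
  ∑ k ∈ Finset.range (n + 1), max (arrive μ e l δ t k - l k) 0

/-- Total waiting time of a visit sequence of length `n+1` started at time `t`. -/
noncomputable def waiting (n : ℕ) (μ e l δ : ℕ → ℝ) (t : ℝ) : ℝ :=
  ∑ k ∈ Finset.range (n + 1), max (e k - arrive μ e l δ t k) 0

/-- Duration of a visit sequence of length `n+1` started at time `t`. -/
noncomputable def duration (n : ℕ) (μ e l δ : ℕ → ℝ) (t : ℝ) : ℝ :=
  (∑ k ∈ Finset.range (n + 1), μ k) + (∑ k ∈ Finset.range n, δ k) +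
    waiting n μ e l δ t

/-- Visit data of the concatenation `σ ⊕ δ ⊕ σ′`: the first `m+1` visits come
from `σ` (data `f`), the remaining ones from `σ′` (data `f'`). -/
noncomputable def catV (m : ℕ) (f f' : ℕ → ℝ) (k : ℕ) : ℝ :=
  if k ≤ m then f k else f' (k - (m + 1))

/-- Travel times of the concatenation `σ ⊕ δ ⊕ σ′`: the first `m` edges come from
`σ`, the connecting edge from visit `m` to visit `m+1` has travel time `c`, and
the remaining edges come from `σ′`. -/
noncomputable def catE (m : ℕ) (δ δ' : ℕ → ℝ) (c : ℝ) (k : ℕ) : ℝ :=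
  if k < m then δ k else if k = m then c else δ' (k - (m + 1))


lemma arrive_cat_le (m : ℕ) (μ e l δ μ' e' l' δ' : ℕ → ℝ) (c t : ℝ) :
    ∀ k ≤ m, arrive (catV m μ μ') (catV m e e') (catV m l l') (catE m δ δ' c) t k
      = arrive μ e l δ t k := by
  intro k
  induction k with
  | zero => intro _; rfl
  | succ k ih =>
    intro hk
    have hk' : k ≤ m := Nat.le_of_succ_le hk
    simp [arrive, ih hk', catV, hk', catE, Nat.lt_of_succ_le hk]

lemma arrive_cat_ge (m : ℕ) (μ e l δ μ' e' l' δ' : ℕ → ℝ) (c t : ℝ) :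
    ∀ j, arrive (catV m μ μ') (catV m e e') (catV m l l') (catE m δ δ' c) t (m + 1 + j)
      = arrive μ' e' l' δ'
          (min (max (arrive μ e l δ t m) (e m)) (l m) + μ m + c) j := by
  intro j
  induction j with
  | zero =>
    show arrive _ _ _ _ t (m + 1) = _
    conv_lhs => rw [arrive]
    rw [arrive_cat_le m μ e l δ μ' e' l' δ' c t m le_rfl]
    simp [catV, catE, arrive]
  | succ j ih =>
    have h1 : m + 1 + (j + 1) = (m + 1 + j) + 1 := by ring
    rw [h1, arrive, ih]
    have h2 : ¬ (m + 1 + j ≤ m) := by omega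
    have h3 : ¬ (m + 1 + j < m) := by omega
    have h4 : ¬ (m + 1 + j = m) := by omega
    have h5 : m + 1 + j - (m + 1) = j := by omega
    simp [catV, catE, h2, h3, h4, h5, arrive]

lemma arrive_eq (m : ℕ) (μ e l δ : ℕ → ℝ) (t : ℝ) (hel : ∀ k ≤ m, e k ≤ l k) :
    ∀ k ≤ m + 1, arrive μ e l δ t k = t + (∑ j ∈ Finset.range k, (μ j + δ j +
      max (e j - arrive μ e l δ t j) 0 - max (arrive μ e l δ t j - l j) 0)) := by
  intro k
  induction k with
  | zero => simp [arrive]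
  | succ k ih =>
    intro hk
    have hk' : k ≤ m := by omega
    conv_lhs => rw [arrive]
    rw [Finset.sum_range_succ]
    have H := ih (by omega)
    have h := hel k hk'
    rcases le_total (arrive μ e l δ t k) (e k) with h1 | h1
    · rw [max_eq_right h1, min_eq_left h]
      rw [max_eq_left (by linarith), max_eq_right (by linarith)]
      linarith
    · rw [max_eq_left h1, max_eq_right (by linarith)]
      rcases le_total (arrive μ e l δ t k) (l k) with h2 | h2
      · rw [min_eq_left h2, max_eq_right (by linarith)]; linarith
      · rw [min_eq_right h2, max_eq_left (by linarith)]; linarith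

lemma clamp_eq (A B t : ℝ) (h : A ≤ B) :
    t + max (A - t) 0 - max (t - B) 0 = min (max t A) B := by
  rcases le_total t A with h1 | h1
  · rw [max_eq_left (by linarith), max_eq_right h1, max_eq_right (by linarith),
      min_eq_left (by linarith)]; ring
  · rw [max_eq_right (by linarith), max_eq_left h1]
    rcases le_total t B with h2 | h2
    · rw [max_eq_right (by linarith), min_eq_left h2]; ring
    · rw [max_eq_left (by linarith), min_eq_right h2]; ring

lemma key_tw (A B C t : ℝ) (h : A ≤ B) :
    max (t - B) 0 + max (min (max t A) B - C) 0
      = max (A - C) 0 + max (t - (min C B + max (A - C) 0)) 0 := by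
  simp only [max_def, min_def]
  split_ifs <;> linarith

/-- Proposition 1 (time-warp part): with Δ = D(σ) - TW(σ) + δ and
Δ_TW = max (E(σ) + Δ - L(σ′)) 0, the time warp of the concatenation satisfies
TW(t) = TW'' + max (t - L'') 0 where TW'' = TW(σ) + TW(σ′) + Δ_TW and
L'' = min (L(σ′) - Δ) (L(σ)) + Δ_TW. -/
theorem concat_timeWarp_representation
    (m n : ℕ) (μ e l δ μ' e' l' δ' : ℕ → ℝ) (c : ℝ)
    (hμ : ∀ k ≤ m, 0 ≤ μ k) (hel : ∀ k ≤ m, e k ≤ l k) (hδ : ∀ k < m, 0 ≤ δ k)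
    (hμ' : ∀ k ≤ n, 0 ≤ μ' k) (hel' : ∀ k ≤ n, e' k ≤ l' k)
    (hδ' : ∀ k < n, 0 ≤ δ' k) (hc : 0 ≤ c)
    (Dσ TWσ Eσ Lσ Dσ' TWσ' Eσ' Lσ' : ℝ)
    (hDσ : ∀ t : ℝ, duration m μ e l δ t = Dσ + max (Eσ - t) 0)
    (hTWσ : ∀ t : ℝ, timeWarp m μ e l δ t = TWσ + max (t - Lσ) 0)
    (hDσ' : ∀ t : ℝ, duration n μ' e' l' δ' t = Dσ' + max (Eσ' - t) 0)
    (hTWσ' : ∀ t : ℝ, timeWarp n μ' e' l' δ' t = TWσ' + max (t - Lσ') 0)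
    (hEL : Eσ ≤ Lσ) (hEL' : Eσ' ≤ Lσ')
    (Δ ΔTW TW'' L'' : ℝ)
    (hΔ : Δ = Dσ - TWσ + c)
    (hΔTW : ΔTW = max (Eσ + Δ - Lσ') 0)
    (hTW'' : TW'' = TWσ + TWσ' + ΔTW)
    (hL'' : L'' = min (Lσ' - Δ) Lσ + ΔTW) :
    ∀ t : ℝ,
      timeWarp (m + n + 1) (catV m μ μ') (catV m e e') (catV m l l')
          (catE m δ δ' c) t =
        TW'' + max (t - L'') 0 := by
  intro t
  have hAE := arrive_eq m μ e l δ t hel (m + 1) le_rfl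
  have hunfold : arrive μ e l δ t (m + 1)
      = min (max (arrive μ e l δ t m) (e m)) (l m) + μ m + δ m := by
    conv_lhs => rw [arrive]
  rw [hunfold] at hAE
  have hsum : ∑ j ∈ Finset.range (m + 1), (μ j + δ j +
        max (e j - arrive μ e l δ t j) 0 - max (arrive μ e l δ t j - l j) 0)
      = (∑ j ∈ Finset.range (m + 1), μ j) + (∑ j ∈ Finset.range (m + 1), δ j)
        + waiting m μ e l δ t - timeWarp m μ e l δ t := by
    simp only [waiting, timeWarp, Finset.sum_sub_distrib, Finset.sum_add_distrib]
  rw [hsum] at hAE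
  have hdelta : ∑ j ∈ Finset.range (m + 1), δ j
      = (∑ j ∈ Finset.range m, δ j) + δ m := Finset.sum_range_succ δ m
  have hdur : duration m μ e l δ t = (∑ k ∈ Finset.range (m + 1), μ k)
      + (∑ k ∈ Finset.range m, δ k) + waiting m μ e l δ t := rfl
  have hdep : min (max (arrive μ e l δ t m) (e m)) (l m) + μ m + c
      = t + duration m μ e l δ t - timeWarp m μ e l δ t + c := by linarith
  have hdep2 : min (max (arrive μ e l δ t m) (e m)) (l m) + μ m + c
      = min (max t Eσ) Lσ + Δ := by
    rw [hdep, hDσ t, hTWσ t, hΔ, ← clamp_eq Eσ Lσ t hEL]; ring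
  have hsplit : timeWarp (m + n + 1) (catV m μ μ') (catV m e e') (catV m l l')
        (catE m δ δ' c) t
      = timeWarp m μ e l δ t + timeWarp n μ' e' l' δ'
          (min (max (arrive μ e l δ t m) (e m)) (l m) + μ m + c) := by
    rw [timeWarp]
    have h2 : m + n + 1 + 1 = (m + 1) + (n + 1) := by ring
    rw [h2, Finset.sum_range_add]
    congr 1
    · apply Finset.sum_congr rfl
      intro k hk
      have hk' : k ≤ m := by simpa [Nat.lt_succ_iff] using hk
      rw [arrive_cat_le m μ e l δ μ' e' l' δ' c t k hk']
      simp [catV, hk']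
    · apply Finset.sum_congr rfl
      intro j hj
      rw [arrive_cat_ge]
      have h3 : ¬ (m + 1 + j ≤ m) := by omega
      have h4 : m + 1 + j - (m + 1) = j := by omega
      simp [catV, h3, h4]
  rw [hsplit, hTWσ t, hTWσ' _, hdep2]
  have h5 : min (max t Eσ) Lσ + Δ - Lσ' = min (max t Eσ) Lσ - (Lσ' - Δ) := by ring
  rw [h5]
  have h6 := key_tw Eσ Lσ (Lσ' - Δ) t hEL
  have h7 : Eσ - (Lσ' - Δ) = Eσ + Δ - Lσ' := by ring
  rw [h7] at h6
  rw [hTW'', hL'', hΔTW]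
  rw [← hΔTW] at h6 ⊢
  linarith
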